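/- Let $r, u \ge 1$ be integers, $s = r + \gamma$ with $\gamma \ge 1$ an integer, $v = s/(s-\gamma)$, and $N \ge 2$. For $1 \le k \le N-1$ set $M_k = \lceil (\ln(N/k))^{(u-1)/s} \rceil$ and $h_k = ((k+1)/N)^v - (k/N)^v$. Then there is a constant $c$ depending only on $r, u, \gamma$ such that for all $1 \le k \le N-1$: $\left( \frac{h_k}{M_k} \right)^s \left( \frac{N}{k} \right)^{v\gamma} \left( 1 + \left( \ln \frac{N}{k} \right)^{u-1} \right) \le \frac{c}{N^s}$. -/

import Mathlib

set_option maxHeartbeats 1000000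


theorem local_interpolation_error_refined (r u γ : ℕ) (hr : 1 ≤ r) (hu : 1 ≤ u) (hγ : 1 ≤ γ) :
    ∃ c : ℝ, 0 < c ∧ ∀ N : ℕ, 2 ≤ N → ∀ k : ℕ, 1 ≤ k → k ≤ N - 1 →
      ((((k + 1 : ℝ) / N) ^ ((r + γ : ℝ) / r) - ((k : ℝ) / N) ^ ((r + γ : ℝ) / r)) /
            (⌈(Real.log ((N : ℝ) / k)) ^ ((u - 1 : ℝ) / (r + γ))⌉₊ : ℝ)) ^ (r + γ) *
          ((N : ℝ) / k) ^ (((r + γ : ℝ) / r) * γ) *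
          (1 + (Real.log ((N : ℝ) / k)) ^ (u - 1))
        ≤ c / (N : ℝ) ^ (r + γ) := by
  have hr0 : (0:ℝ) < r := by exact_mod_cast hr
  have hγ0 : (0:ℝ) < γ := by exact_mod_cast hγ
  set v : ℝ := ((r:ℝ) + γ) / r with hv_def
  have hv1 : 1 ≤ v := by rw [le_div_iff₀ hr0]; linarith
  have hv0 : 0 < v := lt_of_lt_of_le one_pos hv1
  set A : ℝ := v * Real.exp v with hA_def
  have hA0 : 0 < A := mul_pos hv0 (Real.exp_pos v)
  clear_value v A
  refine ⟨2 * A ^ (r + γ), by positivity, ?_⟩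
  intro N hN k hk1 hkN
  have hN0 : (0:ℝ) < N := by
    have : (2:ℝ) ≤ N := by exact_mod_cast hN
    linarith
  have hk0 : (0:ℝ) < k := by exact_mod_cast hk1
  have hkN1 : k + 1 ≤ N := by omega
  have hkR : (k:ℝ) + 1 ≤ N := by exact_mod_cast hkN1
  have hkltN : (k:ℝ) < N := by linarith
  set L : ℝ := Real.log ((N : ℝ) / k) with hL_def
  have hNk1 : 1 < (N:ℝ)/k := (one_lt_div hk0).mpr hkltN
  have hL0 : 0 < L := Real.log_pos hNk1
  set x : ℝ := (k:ℝ)/N with hx_def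
  have hx0 : 0 < x := div_pos hk0 hN0
  have hinv : (N:ℝ)/k = x⁻¹ := by rw [hx_def, inv_div]
  set M : ℕ := ⌈L ^ (((u:ℝ) - 1) / ((r:ℝ) + γ))⌉₊ with hM_def
  have hM1 : 1 ≤ M := Nat.one_le_ceil_iff.mpr (Real.rpow_pos_of_pos hL0 _)
  have hM0 : (0:ℝ) < M := by exact_mod_cast hM1
  clear_value L x M
  -- M^s bounds
  have hMpow : L ^ (u - 1) ≤ (M:ℝ) ^ (r + γ) := by
    have h1 : L ^ (((u:ℝ) - 1) / ((r:ℝ) + γ)) ≤ (M:ℝ) := by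
      rw [hM_def]; exact Nat.le_ceil _
    have h2 : (L ^ (((u:ℝ) - 1) / ((r:ℝ) + γ))) ^ (r + γ) ≤ (M:ℝ) ^ (r + γ) :=
      pow_le_pow_left₀ (Real.rpow_nonneg hL0.le _) h1 _
    refine le_trans (le_of_eq ?_) h2
    rw [← Real.rpow_natCast (L ^ (((u:ℝ) - 1) / ((r:ℝ) + γ))) (r + γ),
      ← Real.rpow_mul hL0.le]
    rw [div_mul_eq_mul_div, mul_div_assoc]
    rw [show ((r + γ : ℕ) : ℝ) / ((r:ℝ) + γ) = 1 by push_cast; field_simp]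
    rw [mul_one, ← Real.rpow_natCast L (u - 1)]
    congr 1
    push_cast [hu]
    ring
  have hM1R : (1:ℝ) ≤ (M:ℝ) ^ (r + γ) := one_le_pow₀ (by exact_mod_cast hM1)
  have hLnn : (0:ℝ) ≤ L ^ (u - 1) := pow_nonneg hL0.le _
  have hfac : 1 + L ^ (u - 1) ≤ 2 * (M:ℝ) ^ (r + γ) := by linarith
  -- the interpolation length bound
  have hxv : (0:ℝ) ≤ x ^ v := Real.rpow_nonneg hx0.le v
  have ht1 : (1:ℝ)/k ≤ 1 := by
    rw [div_le_one hk0]; exact_mod_cast hk1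
  have htk : (0:ℝ) < 1/(k:ℝ) := by positivity
  have hy : ((k:ℝ)+1)/N = x * (1 + 1/k) := by
    rw [hx_def]; field_simp
  have hexp1 : ∀ a : ℝ, 0 ≤ a → Real.exp a - 1 ≤ a * Real.exp a := by
    intro a ha
    have h1 : -a + 1 ≤ Real.exp (-a) := Real.add_one_le_exp (-a)
    have h2 : Real.exp (-a) * Real.exp a = 1 := by
      rw [← Real.exp_add]; simp
    nlinarith [Real.exp_pos a]
  have hbound : (((k:ℝ)+1)/N) ^ v - x ^ v ≤ A * x ^ v / k := by
    rw [hy, Real.mul_rpow hx0.le (by positivity)]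
    have e1 : (1 + 1/(k:ℝ)) ^ v ≤ Real.exp (1/k * v) := by
      rw [Real.exp_mul]
      exact Real.rpow_le_rpow (by positivity)
        (by linarith [Real.add_one_le_exp (1/(k:ℝ))]) hv0.le
    have e2 : Real.exp (1/(k:ℝ) * v) - 1 ≤ (1/(k:ℝ) * v) * Real.exp (1/(k:ℝ) * v) :=
      hexp1 _ (by positivity)
    have e3 : Real.exp (1/(k:ℝ) * v) ≤ Real.exp v := by
      apply Real.exp_le_exp.mpr
      nlinarith
    have e4 : (1/(k:ℝ) * v) * Real.exp (1/(k:ℝ) * v) ≤ (1/(k:ℝ) * v) * Real.exp v :=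
      mul_le_mul_of_nonneg_left e3 (by positivity)
    have e5 : (1 + 1/(k:ℝ)) ^ v - 1 ≤ (1/(k:ℝ) * v) * Real.exp v := by linarith
    have e6 : x ^ v * (1 + 1/(k:ℝ)) ^ v - x ^ v = x ^ v * ((1 + 1/(k:ℝ)) ^ v - 1) := by ring
    rw [e6]
    calc x ^ v * ((1 + 1/(k:ℝ)) ^ v - 1) ≤ x ^ v * ((1/(k:ℝ) * v) * Real.exp v) :=
          mul_le_mul_of_nonneg_left e5 hxv
      _ = A * x ^ v / k := by rw [hA_def]; ring
  have hxy : x ≤ ((k:ℝ)+1)/N := by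
    rw [hx_def]
    gcongr
    linarith
  have hh0 : 0 ≤ (((k:ℝ)+1)/N) ^ v - x ^ v :=
    sub_nonneg.mpr (Real.rpow_le_rpow hx0.le hxy hv0.le)
  rw [hinv]
  have p2 : (0:ℝ) ≤ x⁻¹ ^ (v * (γ:ℝ)) := Real.rpow_nonneg (by positivity) _
  calc (((((k:ℝ)+1)/N) ^ v - x ^ v) / M) ^ (r + γ) * x⁻¹ ^ (v * (γ:ℝ)) * (1 + L ^ (u - 1))
      ≤ ((A * x ^ v / k / M)) ^ (r + γ) * x⁻¹ ^ (v * (γ:ℝ)) * (2 * (M:ℝ) ^ (r + γ)) := by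
        have p1 : ((((k:ℝ)+1)/N) ^ v - x ^ v) / M ≤ A * x ^ v / k / M := by gcongr
        have p1' := pow_le_pow_left₀ (div_nonneg hh0 hM0.le) p1 (r + γ)
        have p3 : (0:ℝ) ≤ 1 + L ^ (u - 1) := by linarith
        have p4 : (0:ℝ) ≤ (A * x ^ v / k / M) ^ (r + γ) :=
          pow_nonneg (div_nonneg (div_nonneg (mul_nonneg hA0.le hxv) hk0.le) hM0.le) _
        exact mul_le_mul (mul_le_mul_of_nonneg_right p1' p2) hfac p3 (mul_nonneg p4 p2)
    _ = 2 * A ^ (r + γ) / (N:ℝ) ^ (r + γ) := by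
        have q1 : (x ^ v) ^ (r + γ) = x ^ (v * ((r:ℝ) + γ)) := by
          rw [← Real.rpow_natCast (x ^ v) (r + γ), ← Real.rpow_mul hx0.le]
          congr 1
          push_cast
          ring
        have q2 : x⁻¹ ^ (v * (γ:ℝ)) = (x ^ (v * (γ:ℝ)))⁻¹ := Real.inv_rpow hx0.le _
        have hvr : v * (r:ℝ) = (r:ℝ) + γ := by
          rw [hv_def]; field_simp
        have q3 : x ^ (v * ((r:ℝ) + γ)) = x ^ (v * (γ:ℝ)) * x ^ ((r:ℝ) + γ) := by
          rw [← Real.rpow_add hx0]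
          congr 1
          linear_combination hvr
        have q4 : x ^ ((r:ℝ) + γ) = x ^ (r + γ : ℕ) := by
          rw [← Real.rpow_natCast x (r + γ)]
          congr 1
          push_cast
          ring
        have q5 : x ^ (r + γ : ℕ) = (k:ℝ) ^ (r + γ) / (N:ℝ) ^ (r + γ) := by
          rw [hx_def, div_pow]
        have hne : x ^ (v * (γ:ℝ)) ≠ 0 := (Real.rpow_pos_of_pos hx0 _).ne'
        rw [div_pow, div_pow, mul_pow, q1, q2, q3, q4, q5]
        field_simp
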